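/- For all real x ≥ 0 and real y ≥ 1, the generalized binomial coefficient satisfies Γ(x+y+1)/(Γ(x+1)Γ(y+1)) ≥ ((x+y)/y)^y. -/

import Mathlib

open Filter Finset Real

private lemma hasDerivAt_log_add (c t : ℝ) (h : t + c ≠ 0) :
    HasDerivAt (fun u : ℝ => Real.log (u + c)) (t + c)⁻¹ t := by
  have h1 : HasDerivAt (fun u : ℝ => u + c) 1 t := (hasDerivAt_id t).add_const c
  have h2 := (Real.hasDerivAt_log h).comp t h1
  rw [mul_one] at h2
  exact h2

/-- Auxiliary function: `Φ(t) = Σ_{j≤n} (log(t+1+j) - log(t+y+1+j)) + y log(t+y+n+1) - y log(t+y)`. -/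
noncomputable def phiAux (y : ℝ) (n : ℕ) (t : ℝ) : ℝ :=
  (∑ j ∈ Finset.range (n + 1), (Real.log (t + (1 + j)) - Real.log (t + (y + 1 + j))))
    + y * Real.log (t + (y + n + 1)) - y * Real.log (t + y)

private lemma phiAux_hasDerivAt (y : ℝ) (hy : 1 ≤ y) (n : ℕ) {t : ℝ} (ht : 0 ≤ t) :
    HasDerivAt (phiAux y n)
      ((∑ j ∈ Finset.range (n + 1), ((t + (1 + j))⁻¹ - (t + (y + 1 + j))⁻¹))
        + y * (t + (y + n + 1))⁻¹ - y * (t + y)⁻¹) t := by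
  have hy0 : (0:ℝ) < y := lt_of_lt_of_le one_pos hy
  have hsum : HasDerivAt
      (fun u : ℝ => ∑ j ∈ Finset.range (n + 1),
        (Real.log (u + (1 + j)) - Real.log (u + (y + 1 + j))))
      (∑ j ∈ Finset.range (n + 1), ((t + (1 + j))⁻¹ - (t + (y + 1 + j))⁻¹)) t := by
    apply HasDerivAt.fun_sum
    intro j _
    have h1 : t + (1 + (j:ℝ)) ≠ 0 := by positivity
    have h2 : t + (y + 1 + (j:ℝ)) ≠ 0 := by positivity
    exact (hasDerivAt_log_add _ t h1).sub (hasDerivAt_log_add _ t h2)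
  have h3 : t + (y + (n:ℝ) + 1) ≠ 0 := by positivity
  have h4 : t + y ≠ 0 := by positivity
  exact (hsum.add ((hasDerivAt_log_add _ t h3).const_mul y)).sub
    ((hasDerivAt_log_add _ t h4).const_mul y)

private lemma phiAux_mono (y : ℝ) (hy : 1 ≤ y) (n : ℕ) {x : ℝ} (hx : 0 ≤ x) :
    phiAux y n 0 ≤ phiAux y n x := by
  have hy0 : (0:ℝ) < y := lt_of_lt_of_le one_pos hy
  have key : MonotoneOn (phiAux y n) (Set.Ici (0:ℝ)) := by
    apply monotoneOn_of_deriv_nonneg (convex_Ici 0)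
    · intro t ht
      exact (phiAux_hasDerivAt y hy n ht).continuousAt.continuousWithinAt
    · intro t ht
      rw [interior_Ici] at ht
      exact (phiAux_hasDerivAt y hy n (le_of_lt ht)).differentiableAt.differentiableWithinAt
    · intro t ht
      rw [interior_Ici] at ht
      have ht' : (0:ℝ) ≤ t := le_of_lt ht
      rw [(phiAux_hasDerivAt y hy n ht').deriv]
      -- termwise comparison with a telescoping sum
      have hterm : ∀ j ∈ Finset.range (n + 1),
          y * (t + y + (j:ℝ))⁻¹ - y * (t + y + ((j+1 : ℕ):ℝ))⁻¹
            ≤ (t + (1 + (j:ℝ)))⁻¹ - (t + (y + 1 + (j:ℝ)))⁻¹ := by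
        intro j _
        have ha : (0:ℝ) < t + (1 + (j:ℝ)) := by positivity
        have hb : (0:ℝ) < t + (y + 1 + (j:ℝ)) := by positivity
        have hp : (0:ℝ) < t + y + (j:ℝ) := by positivity
        have hq : (0:ℝ) < t + y + ((j+1 : ℕ):ℝ) := by positivity
        have e1 : (t + (1 + (j:ℝ)))⁻¹ - (t + (y + 1 + (j:ℝ)))⁻¹
            = y / ((t + (1 + (j:ℝ))) * (t + (y + 1 + (j:ℝ)))) := by
          rw [inv_sub_inv ha.ne' hb.ne']
          congr 1 <;> ring
        have e2 : y * (t + y + (j:ℝ))⁻¹ - y * (t + y + ((j+1 : ℕ):ℝ))⁻¹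
            = y / ((t + y + (j:ℝ)) * (t + y + ((j+1 : ℕ):ℝ))) := by
          rw [← mul_sub, inv_sub_inv hp.ne' hq.ne']
          have e0 : t + y + ((j+1 : ℕ):ℝ) - (t + y + (j:ℝ)) = 1 := by push_cast; ring
          rw [e0, mul_one_div]
        rw [e1, e2]
        apply div_le_div_of_nonneg_left (le_of_lt hy0) (by positivity)
        have h5 : t + (1 + (j:ℝ)) ≤ t + y + (j:ℝ) := by linarith
        have h6 : t + (y + 1 + (j:ℝ)) = t + y + ((j+1 : ℕ):ℝ) := by push_cast; ring
        rw [h6]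
        exact mul_le_mul_of_nonneg_right h5 (le_of_lt hq)
      have h := Finset.sum_le_sum hterm
      rw [Finset.sum_range_sub' (fun j : ℕ => y * (t + y + (j:ℝ))⁻¹) (n+1)] at h
      push_cast at h
      have e4 : t + y + ((n:ℝ) + 1) = t + (y + (n:ℝ) + 1) := by ring
      have e5 : t + y + (0:ℝ) = t + y := by ring
      rw [e4, e5] at h
      linarith
  exact key (Set.self_mem_Ici) (Set.mem_Ici.2 hx) hx

private lemma gammaSeq_pos {s : ℝ} (hs : 0 < s) {n : ℕ} (hn : 1 ≤ n) :
    0 < Real.GammaSeq s n := by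
  have hn0 : (0:ℝ) < n := by exact_mod_cast hn
  rw [Real.GammaSeq]
  apply div_pos
  · exact mul_pos (Real.rpow_pos_of_pos hn0 s) (by exact_mod_cast n.factorial_pos)
  · exact Finset.prod_pos fun j _ => by positivity

private lemma log_gammaSeq {s : ℝ} (hs : 0 < s) {n : ℕ} (hn : 1 ≤ n) :
    Real.log (Real.GammaSeq s n)
      = s * Real.log n + Real.log (n.factorial)
        - ∑ j ∈ Finset.range (n + 1), Real.log (s + j) := by
  have hn0 : (0:ℝ) < n := by exact_mod_cast hn
  have hfac : ((n.factorial : ℝ)) ≠ 0 := by exact_mod_cast n.factorial_pos.ne'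
  have hprod : (∏ j ∈ Finset.range (n + 1), (s + (j:ℝ))) ≠ 0 :=
    (Finset.prod_pos fun j _ => by positivity).ne'
  rw [Real.GammaSeq, Real.log_div (by positivity) hprod, Real.log_mul (by positivity) hfac,
    Real.log_rpow hn0, Real.log_prod (fun j _ => by positivity)]

private lemma key_ineq (x y : ℝ) (hx : 0 ≤ x) (hy : 1 ≤ y) {n : ℕ} (hn : 1 ≤ n) :
    ((x + y) / y) ^ y * ((y + n + 1) / (x + y + n + 1)) ^ y
      ≤ Real.GammaSeq (x + y + 1) n / (Real.GammaSeq (x + 1) n * Real.GammaSeq (y + 1) n) := by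
  have hy0 : (0:ℝ) < y := lt_of_lt_of_le one_pos hy
  have hxy : (0:ℝ) < x + y := by linarith
  have hn0 : (0:ℝ) < n := by exact_mod_cast hn
  have hb1 : (0:ℝ) < (x + y) / y := by positivity
  have hb2 : (0:ℝ) < (y + n + 1) / (x + y + n + 1) := by positivity
  have hLpos : (0:ℝ) < ((x + y) / y) ^ y * ((y + n + 1) / (x + y + n + 1)) ^ y :=
    mul_pos (Real.rpow_pos_of_pos hb1 y) (Real.rpow_pos_of_pos hb2 y)
  have hRpos : (0:ℝ) < Real.GammaSeq (x + y + 1) n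
      / (Real.GammaSeq (x + 1) n * Real.GammaSeq (y + 1) n) :=
    div_pos (gammaSeq_pos (by linarith) hn)
      (mul_pos (gammaSeq_pos (by linarith) hn) (gammaSeq_pos (by linarith) hn))
  rw [← Real.log_le_log_iff hLpos hRpos]
  -- compute the log of the left side
  have hL : Real.log (((x + y) / y) ^ y * ((y + n + 1) / (x + y + n + 1)) ^ y)
      = y * (Real.log (x + y) - Real.log y)
        + y * (Real.log (y + n + 1) - Real.log (x + y + n + 1)) := by
    rw [Real.log_mul (Real.rpow_pos_of_pos hb1 y).ne' (Real.rpow_pos_of_pos hb2 y).ne',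
      Real.log_rpow hb1, Real.log_rpow hb2, Real.log_div hxy.ne' hy0.ne',
      Real.log_div (by positivity) (by positivity)]
  -- compute the log of the right side
  have hR : Real.log (Real.GammaSeq (x + y + 1) n
        / (Real.GammaSeq (x + 1) n * Real.GammaSeq (y + 1) n))
      = (∑ j ∈ Finset.range (n + 1), Real.log (x + 1 + j))
        + (∑ j ∈ Finset.range (n + 1), Real.log (y + 1 + j))
        - (∑ j ∈ Finset.range (n + 1), Real.log (x + y + 1 + j))
        - Real.log n - Real.log (n.factorial) := by
    rw [Real.log_div (gammaSeq_pos (by linarith) hn).ne'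
        (mul_pos (gammaSeq_pos (by linarith) hn) (gammaSeq_pos (by linarith) hn)).ne',
      Real.log_mul (gammaSeq_pos (by linarith) hn).ne' (gammaSeq_pos (by linarith) hn).ne',
      log_gammaSeq (by linarith : (0:ℝ) < x + y + 1) hn,
      log_gammaSeq (by linarith : (0:ℝ) < x + 1) hn,
      log_gammaSeq (by linarith : (0:ℝ) < y + 1) hn]
    ring
  rw [hL, hR]
  -- the monotonicity of phiAux
  have hphi := phiAux_mono y hy n hx
  simp only [phiAux, zero_add] at hphi
  rw [Finset.sum_sub_distrib, Finset.sum_sub_distrib] at hphi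
  -- convert sums in hphi to the normal forms used above
  have eA : (∑ j ∈ Finset.range (n + 1), Real.log (x + (1 + (j:ℝ))))
      = ∑ j ∈ Finset.range (n + 1), Real.log (x + 1 + j) :=
    Finset.sum_congr rfl fun j _ => by rw [← add_assoc]
  have eB : (∑ j ∈ Finset.range (n + 1), Real.log (x + (y + 1 + (j:ℝ))))
      = ∑ j ∈ Finset.range (n + 1), Real.log (x + y + 1 + j) :=
    Finset.sum_congr rfl fun j _ => by rw [show x + (y + 1 + (j:ℝ)) = x + y + 1 + j by ring]
  have eD : Real.log (x + (y + (n:ℝ) + 1)) = Real.log (x + y + n + 1) := by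
    rw [show x + (y + (n:ℝ) + 1) = x + y + n + 1 by ring]
  rw [eA, eB, eD] at hphi
  -- the sum of logs of 1 + j
  have eC : (∑ j ∈ Finset.range (n + 1), Real.log (1 + (j:ℝ)))
      = Real.log (n.factorial) + Real.log (n + 1) := by
    rw [← Real.log_prod (fun j _ => by positivity)]
    have hp : (∏ j ∈ Finset.range (n + 1), (1 + (j:ℝ))) = ((n+1).factorial : ℝ) := by
      rw [← Finset.prod_range_add_one_eq_factorial (n+1)]
      push_cast
      exact Finset.prod_congr rfl fun j _ => by ring
    rw [hp, Nat.factorial_succ]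
    push_cast
    rw [Real.log_mul (by positivity) (by exact_mod_cast n.factorial_pos.ne'), add_comm]
  rw [eC] at hphi
  have hlogn : Real.log n ≤ Real.log ((n:ℝ) + 1) := by
    exact Real.log_le_log hn0 (by linarith)
  linarith

theorem gamma_binom_lower_bound_large (x y : ℝ) (hx : 0 ≤ x) (hy : 1 ≤ y) :
    Real.Gamma (x + y + 1) / (Real.Gamma (x + 1) * Real.Gamma (y + 1)) ≥ ((x + y) / y) ^ y := by
  have hy0 : (0:ℝ) < y := lt_of_lt_of_le one_pos hy
  have hxy : (0:ℝ) < x + y := by linarith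
  -- the sequence of GammaSeq ratios converges to the Gamma ratio
  have hden : Real.Gamma (x + 1) * Real.Gamma (y + 1) ≠ 0 :=
    (mul_pos (Real.Gamma_pos_of_pos (by linarith)) (Real.Gamma_pos_of_pos (by linarith))).ne'
  have hG : Filter.Tendsto
      (fun n : ℕ => Real.GammaSeq (x + y + 1) n
        / (Real.GammaSeq (x + 1) n * Real.GammaSeq (y + 1) n)) atTop
      (nhds (Real.Gamma (x + y + 1) / (Real.Gamma (x + 1) * Real.Gamma (y + 1)))) :=
    (Real.GammaSeq_tendsto_Gamma (x + y + 1)).div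
      ((Real.GammaSeq_tendsto_Gamma (x + 1)).mul (Real.GammaSeq_tendsto_Gamma (y + 1))) hden
  -- the lower-bound sequence converges to ((x+y)/y)^y
  have hd : Filter.Tendsto (fun n : ℕ => (x + y + (n:ℝ) + 1)) atTop atTop := by
    apply Filter.tendsto_atTop_add_const_right
    exact Filter.tendsto_atTop_add_const_left _ _ tendsto_natCast_atTop_atTop
  have h0 : Filter.Tendsto (fun n : ℕ => x / (x + y + (n:ℝ) + 1)) atTop (nhds 0) :=
    Filter.Tendsto.div_atTop tendsto_const_nhds hd
  have hq : Filter.Tendsto (fun n : ℕ => (y + (n:ℝ) + 1) / (x + y + (n:ℝ) + 1)) atTop (nhds 1) := by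
    have heq : (fun n : ℕ => (y + (n:ℝ) + 1) / (x + y + (n:ℝ) + 1))
        = fun n : ℕ => 1 - x / (x + y + (n:ℝ) + 1) := by
      funext n
      have hne : (x + y + (n:ℝ) + 1) ≠ 0 := by positivity
      field_simp
      ring
    rw [heq]
    have hone : Filter.Tendsto (fun _ : ℕ => (1:ℝ)) atTop (nhds 1) := tendsto_const_nhds
    simpa using hone.sub h0
  have hB : Filter.Tendsto
      (fun n : ℕ => ((x + y) / y) ^ y * ((y + (n:ℝ) + 1) / (x + y + (n:ℝ) + 1)) ^ y) atTop
      (nhds (((x + y) / y) ^ y)) := by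
    have := (hq.rpow_const (Or.inr (le_of_lt hy0))).const_mul (((x + y) / y) ^ y)
    simpa using this
  rw [ge_iff_le]
  refine le_of_tendsto_of_tendsto hB hG ?_
  filter_upwards [Filter.eventually_ge_atTop 1] with n hn
  exact key_ineq x y hx hy hn
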